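/- Let A be a combinatorial class with no structures of size 0 (a_0 = 0), and let Seq(A) be the class of all finite sequences (lists) of A-structures, with size of a sequence defined as the sum of the sizes of its components. If 0 < x is such that A(x) = ∑_n a_n x^n converges with A(x) < 1, then the family (x^{|w|})_{w ∈ Seq(A)} indexed by all finite lists w of elements of A is summable, with sum equal to 1/(1 − A(x)). -/

import Mathlib

theorem fin_tuple_hasSum {A : Type*} (sa : A → ℕ) {x : ℝ} (hx : 0 < x)
    {Ax : ℝ} (hAx : HasSum (fun α : A => x ^ sa α) Ax) (n : ℕ) :
    HasSum (fun g : Fin n → A => ∏ i, x ^ sa (g i)) (Ax ^ n) := by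
  induction n with
  | zero =>
      have h1 : HasSum (fun g : Fin 0 → A => ∏ i, x ^ sa (g i))
          (∏ i : Fin 0, x ^ sa ((default : Fin 0 → A) i)) :=
        hasSum_single default fun b hb => absurd (Subsingleton.elim b default) hb
      simpa using h1
  | succ n ih =>
      have hs : Summable (fun p : A × (Fin n → A) =>
          (x ^ sa p.1) * ∏ i, x ^ sa (p.2 i)) :=
        Summable.mul_of_nonneg (f := fun α : A => x ^ sa α)
          (g := fun h : Fin n → A => ∏ i, x ^ sa (h i)) hAx.summable ih.summable
          (fun a => by positivity) (fun g => Finset.prod_nonneg fun i _ => by positivity)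
      have hmul : HasSum (fun p : A × (Fin n → A) =>
          (x ^ sa p.1) * ∏ i, x ^ sa (p.2 i)) (Ax * Ax ^ n) :=
        (hAx.mul_eq ih hs.hasSum) ▸ hs.hasSum
      have h2 := ((Fin.consEquiv (fun _ : Fin (n + 1) => A)).symm.hasSum_iff (f := fun p : A × (Fin n → A) =>
          (x ^ sa p.1) * ∏ i, x ^ sa (p.2 i)) (a := Ax * Ax ^ n)).mpr hmul
      rw [pow_succ']
      convert h2 using 2 with g
      simp [Fin.consEquiv, Fin.prod_univ_succ, Fin.tail]

theorem sequence_class_boltzmann_summable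
    (A : Type*) [Countable A] (sa : A → ℕ)
    (hfa : ∀ n : ℕ, {α : A | sa α = n}.Finite)
    (h0 : ∀ α : A, sa α ≠ 0)
    (x : ℝ) (hx : 0 < x)
    (Ax : ℝ) (hAx : HasSum (fun α : A => x ^ sa α) Ax) (hAx1 : Ax < 1) :
    HasSum (fun w : List A => x ^ (w.map sa).sum) (1 / (1 - Ax)) := by
  have hAx0 : 0 ≤ Ax := hAx.nonneg fun a => by positivity
  set F : (Σ n, Fin n → A) → ℝ := fun p => ∏ i, x ^ sa (p.2 i) with hF
  have hfib : ∀ n, HasSum (fun g : Fin n → A => F ⟨n, g⟩) (Ax ^ n) :=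
    fun n => fin_tuple_hasSum sa hx hAx n
  have hFnn : ∀ p, 0 ≤ F p := fun p => by positivity
  have hgeo : HasSum (fun n : ℕ => Ax ^ n) (1 / (1 - Ax)) := by
    simpa [one_div] using hasSum_geometric_of_lt_one hAx0 hAx1
  have hsum : Summable F := by
    rw [summable_sigma_of_nonneg hFnn]
    refine ⟨fun n => (hfib n).summable, ?_⟩
    simp only [fun n => (hfib n).tsum_eq]
    exact hgeo.summable
  have hFhas := hsum.hasSum
  have htot : HasSum F (1 / (1 - Ax)) := by
    have h1 : HasSum (fun n : ℕ => Ax ^ n) (∑' p, F p) := HasSum.sigma hFhas hfib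
    rwa [h1.unique hgeo] at hFhas
  have hkey : ∀ w : List A,
      x ^ (w.map sa).sum = F (List.equivSigmaTuple w) := by
    intro w
    have hw : w = List.ofFn (List.equivSigmaTuple w).2 := by
      simp [List.equivSigmaTuple, List.ofFn_get]
    conv_lhs => rw [hw]
    rw [List.map_ofFn, List.sum_ofFn, ← Finset.prod_pow_eq_pow_sum]
    simp [hF, Function.comp]
  have h := (List.equivSigmaTuple (α := A)).hasSum_iff
    (f := F) (a := 1 / (1 - Ax)) |>.mpr htot
  have heq : (fun w : List A => x ^ (w.map sa).sum)
      = F ∘ (List.equivSigmaTuple (α := A)) := funext hkey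
  rw [heq]; exact h
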